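/- Let F be a finite field of characteristic 2 with q = |F| > 2, and let W be a pencil of conics over F with a1(W) = 1, a2r(W) = 0 and a2i(W) > 0. Then a3(W) > 0, i.e., W contains a nonsingular conic. -/

import Mathlib

noncomputable section

open MvPolynomial

namespace Pencils

/-- The space of ternary polynomials over `F`. -/
abbrev Poly (F : Type*) [Field F] : Type _ := MvPolynomial (Fin 3) F

variable {F : Type*} [Field F]

/-- The coefficient of the monomial `X i * X j` in `f` (for `i = j`, of `X i ^ 2`). -/
def qc (f : Poly F) (i j : Fin 3) : F :=
  MvPolynomial.coeff (Finsupp.single i 1 + Finsupp.single j 1) f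

/-- A quadratic form over a field of characteristic 2 is singular iff
`a00·a12² + a11·a02² + a22·a01² + a01·a02·a12 = 0`. -/
def IsSingular (f : Poly F) : Prop :=
  qc f 0 0 * qc f 1 2 ^ 2 + qc f 1 1 * qc f 0 2 ^ 2 + qc f 2 2 * qc f 0 1 ^ 2 +
    qc f 0 1 * qc f 0 2 * qc f 1 2 = 0

/-- A pencil of conics: a 2-dimensional subspace of the space of
homogeneous quadratic forms in `X 0, X 1, X 2`. -/
def IsPencil (W : Submodule F (Poly F)) : Prop :=
  W ≤ homogeneousSubmodule (Fin 3) F 2 ∧ Module.finrank F ↥W = 2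

/-- A member of a pencil `W` is a 1-dimensional subspace of `W`. -/
def IsMember (W L : Submodule F (Poly F)) : Prop :=
  L ≤ W ∧ Module.finrank F ↥L = 1

/-- A double line: all nonzero elements are squares of nonzero linear forms. -/
def IsDoubleLine (L : Submodule F (Poly F)) : Prop :=
  ∀ f ∈ L, f ≠ 0 → ∃ ℓ : Poly F, ℓ.IsHomogeneous 1 ∧ ℓ ≠ 0 ∧ f = ℓ ^ 2

/-- A real line pair: all nonzero elements are products of two linearly
independent linear forms over `F`. -/
def IsRealPair (L : Submodule F (Poly F)) : Prop :=
  ∀ f ∈ L, f ≠ 0 → ∃ ℓ m : Poly F, ℓ.IsHomogeneous 1 ∧ m.IsHomogeneous 1 ∧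
    LinearIndependent F ![ℓ, m] ∧ f = ℓ * m

/-- `f` has a nonzero linear form over `F` as a factor. -/
def HasLinearFactor (f : Poly F) : Prop :=
  ∃ ℓ : Poly F, ℓ.IsHomogeneous 1 ∧ ℓ ≠ 0 ∧ ℓ ∣ f

/-- An imaginary line pair: all nonzero elements are singular with no linear factor over `F`. -/
def IsImagPair (L : Submodule F (Poly F)) : Prop :=
  ∀ f ∈ L, f ≠ 0 → IsSingular f ∧ ¬ HasLinearFactor f

/-- A nonsingular member: all nonzero elements are nonsingular. -/
def IsNonsingularConic (L : Submodule F (Poly F)) : Prop :=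
  ∀ f ∈ L, f ≠ 0 → ¬ IsSingular f

/-- `a1 W`: number of members of `W` that are double lines. -/
def a1 (W : Submodule F (Poly F)) : ℕ :=
  Nat.card {L : Submodule F (Poly F) // IsMember W L ∧ IsDoubleLine L}

/-- `a2r W`: number of members of `W` that are real line pairs. -/
def a2r (W : Submodule F (Poly F)) : ℕ :=
  Nat.card {L : Submodule F (Poly F) // IsMember W L ∧ IsRealPair L}

/-- `a2i W`: number of members of `W` that are imaginary line pairs. -/
def a2i (W : Submodule F (Poly F)) : ℕ :=
  Nat.card {L : Submodule F (Poly F) // IsMember W L ∧ IsImagPair L}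

/-- `a3 W`: number of members of `W` that are nonsingular conics. -/
def a3 (W : Submodule F (Poly F)) : ℕ :=
  Nat.card {L : Submodule F (Poly F) // IsMember W L ∧ IsNonsingularConic L}

/-- A base point of the pencil `W`: a 1-dimensional subspace of `F³` on which
every element of `W` vanishes. -/
def IsBasePoint (W : Submodule F (Poly F)) (P : Submodule F (Fin 3 → F)) : Prop :=
  Module.finrank F ↥P = 1 ∧ ∀ f ∈ W, ∀ v ∈ P, MvPolynomial.eval v f = 0

/-- `b W`: the number of base points of `W`. -/
def b (W : Submodule F (Poly F)) : ℕ :=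
  Nat.card {P : Submodule F (Fin 3 → F) // IsBasePoint W P}

/-- The substitution action of a matrix `g` on quadratic forms: `(g • f)(X) = f(g·X)`. -/
def act (g : Matrix (Fin 3) (Fin 3) F) : Poly F →ₗ[F] Poly F :=
  (MvPolynomial.aeval (fun i => ∑ j : Fin 3, MvPolynomial.C (g i j) * MvPolynomial.X j) :
    Poly F →ₐ[F] Poly F).toLinearMap


/-! ### Auxiliary lemmas -/

section Aux

lemma fs3_eq {d e : Fin 3 →₀ ℕ} : d = e ↔ d 0 = e 0 ∧ d 1 = e 1 ∧ d 2 = e 2 := by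
  constructor
  · rintro rfl; exact ⟨rfl, rfl, rfl⟩
  · rintro ⟨h0, h1, h2⟩; ext i; fin_cases i <;> assumption

lemma coeff_XX (i j : Fin 3) (d : Fin 3 →₀ ℕ) :
    MvPolynomial.coeff d (X i * X j : Poly F) =
      if d = Finsupp.single i 1 + Finsupp.single j 1 then 1 else 0 := by
  rw [X, X, monomial_mul, coeff_monomial, one_mul]
  split_ifs with h1 h2 h2 <;> simp_all [eq_comm]

lemma coeff_CX (a : F) (i : Fin 3) (d : Fin 3 →₀ ℕ) :
    MvPolynomial.coeff d (C a * X i : Poly F) = if d = Finsupp.single i 1 then a else 0 := by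
  rw [X, coeff_C_mul, coeff_monomial]
  split_ifs with h1 h2 h2 <;> simp_all [eq_comm]

lemma degree_single2 (i j : Fin 3) (d : Fin 3 →₀ ℕ)
    (hd : d = Finsupp.single i 1 + Finsupp.single j 1) : d 0 + d 1 + d 2 = 2 := by
  subst hd; fin_cases i <;> fin_cases j <;> simp [Finsupp.single_apply]

lemma degree3 (d : Fin 3 →₀ ℕ) : d.degree = d 0 + d 1 + d 2 := by
  rw [Finsupp.degree]
  show ∑ i ∈ d.support, d i = _
  rw [Finset.sum_subset (Finset.subset_univ _) (fun x _ hx => Finsupp.notMem_support_iff.mp hx)]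
  exact Fin.sum_univ_three d

lemma qc_add (f h : Poly F) (i j : Fin 3) : qc (f + h) i j = qc f i j + qc h i j :=
  coeff_add _ _ _

lemma qc_smul (a : F) (f : Poly F) (i j : Fin 3) : qc (a • f) i j = a * qc f i j := by
  simp [qc, coeff_smul]

lemma qc_zero (i j : Fin 3) : qc (0 : Poly F) i j = 0 := by simp [qc]

lemma decomp2 (f : Poly F) (hf : f.IsHomogeneous 2) :
    f = C (qc f 0 0) * (X 0 * X 0) + C (qc f 1 1) * (X 1 * X 1) + C (qc f 2 2) * (X 2 * X 2)
      + C (qc f 0 1) * (X 0 * X 1) + C (qc f 0 2) * (X 0 * X 2) + C (qc f 1 2) * (X 1 * X 2) := by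
  apply MvPolynomial.ext
  intro d
  by_cases hsum : d 0 + d 1 + d 2 = 2
  · have hd : d = Finsupp.single 0 (d 0) + Finsupp.single 1 (d 1) + Finsupp.single 2 (d 2) := by
      rw [fs3_eq]; simp [Finsupp.single_apply]
    have h0 : d 0 ≤ 2 := by omega
    have h1 : d 1 ≤ 2 := by omega
    have h2 : d 2 ≤ 2 := by omega
    interval_cases h : (d 0) <;> interval_cases h' : (d 1) <;> interval_cases h'' : (d 2) <;>
        first
        | omega
        | (rw [show d = _ from hd]
           simp only [Finsupp.single_zero, zero_add, add_zero, qc, coeff_add, coeff_C_mul,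
             coeff_XX, ← Finsupp.single_add]
           norm_num
           simp [fs3_eq, Finsupp.single_apply])
  · have hz : MvPolynomial.coeff d f = 0 := by
      apply hf.coeff_eq_zero
      rw [degree3]; exact hsum
    rw [hz, coeff_add, coeff_add, coeff_add, coeff_add, coeff_add]
    simp only [coeff_C_mul, coeff_XX]
    rw [if_neg (fun h => hsum (degree_single2 _ _ _ h)),
      if_neg (fun h => hsum (degree_single2 _ _ _ h)),
      if_neg (fun h => hsum (degree_single2 _ _ _ h)),
      if_neg (fun h => hsum (degree_single2 _ _ _ h)),
      if_neg (fun h => hsum (degree_single2 _ _ _ h)),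
      if_neg (fun h => hsum (degree_single2 _ _ _ h))]
    simp

/-- The coefficient of `X i` in a linear form. -/
def lc (f : Poly F) (i : Fin 3) : F := MvPolynomial.coeff (Finsupp.single i 1) f

lemma decomp1 (f : Poly F) (hf : f.IsHomogeneous 1) :
    f = C (lc f 0) * X 0 + C (lc f 1) * X 1 + C (lc f 2) * X 2 := by
  apply MvPolynomial.ext
  intro d
  by_cases hsum : d 0 + d 1 + d 2 = 1
  · have hd : d = Finsupp.single 0 (d 0) + Finsupp.single 1 (d 1) + Finsupp.single 2 (d 2) := by
      rw [fs3_eq]; simp [Finsupp.single_apply]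
    have h0 : d 0 ≤ 1 := by omega
    have h1 : d 1 ≤ 1 := by omega
    have h2 : d 2 ≤ 1 := by omega
    interval_cases h : (d 0) <;> interval_cases h' : (d 1) <;> interval_cases h'' : (d 2) <;>
        first
        | omega
        | (rw [show d = _ from hd]
           simp only [Finsupp.single_zero, zero_add, add_zero, lc, coeff_add, coeff_CX]
           norm_num
           simp [fs3_eq, Finsupp.single_apply])
  · have hz : MvPolynomial.coeff d f = 0 := by
      apply hf.coeff_eq_zero
      rw [degree3]; exact hsum
    have hne : ∀ i : Fin 3, d ≠ Finsupp.single i 1 := by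
      intro i h
      apply hsum
      subst h; fin_cases i <;> simp [Finsupp.single_apply]
    rw [hz, coeff_add, coeff_add, coeff_CX, coeff_CX, coeff_CX,
      if_neg (hne 0), if_neg (hne 1), if_neg (hne 2)]
    simp

lemma finite_members [Finite F] (W : Submodule F (Poly F)) (h2 : Module.finrank F ↥W = 2)
    (p : Submodule F (Poly F) → Prop) :
    Finite {L : Submodule F (Poly F) // IsMember W L ∧ p L} := by
  have : FiniteDimensional F ↥W := FiniteDimensional.of_finrank_eq_succ h2
  have : Finite ↥W := Module.finite_of_finite F
  have : Finite (Submodule F ↥W) :=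
    Finite.of_injective (fun S => (S : Set ↥W)) SetLike.coe_injective
  apply Finite.of_injective
    (fun L : {L : Submodule F (Poly F) // IsMember W L ∧ p L} => Submodule.comap W.subtype L.1)
  rintro ⟨L1, hL1, _⟩ ⟨L2, hL2, _⟩ h
  have := congrArg (Submodule.map W.subtype) h
  rw [Submodule.map_comap_subtype, Submodule.map_comap_subtype,
    inf_eq_right.2 hL1.1, inf_eq_right.2 hL2.1] at this
  exact Subtype.ext this

lemma exists_ne_zero_of_member (W L : Submodule F (Poly F)) (h : IsMember W L) :
    ∃ f ∈ L, f ≠ 0 := by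
  by_contra hc
  push_neg at hc
  have : L = ⊥ := by
    rw [Submodule.eq_bot_iff]; exact hc
  rw [this] at h
  simpa using h.2

lemma isMember_span (W : Submodule F (Poly F)) (h : Poly F) (hW : h ∈ W) (h0 : h ≠ 0) :
    IsMember W (Submodule.span F {h}) :=
  ⟨Submodule.span_le.2 (by simpa using hW), finrank_span_singleton h0⟩

/-- Explicit linear form. -/
def lin (p q r : F) : Poly F := C p * X 0 + C q * X 1 + C r * X 2

lemma lin_hom (p q r : F) : (lin p q r).IsHomogeneous 1 :=
  ((isHomogeneous_C_mul_X p 0).add (isHomogeneous_C_mul_X q 1)).add (isHomogeneous_C_mul_X r 2)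

lemma lin_coeff0 (p q r : F) :
    MvPolynomial.coeff (Finsupp.single (0 : Fin 3) 1) (lin p q r) = p := by
  simp [lin, coeff_add, coeff_CX, fs3_eq, Finsupp.single_apply]

lemma lin_coeff1 (p q r : F) :
    MvPolynomial.coeff (Finsupp.single (1 : Fin 3) 1) (lin p q r) = q := by
  simp [lin, coeff_add, coeff_CX, fs3_eq, Finsupp.single_apply]

lemma lin_coeff2 (p q r : F) :
    MvPolynomial.coeff (Finsupp.single (2 : Fin 3) 1) (lin p q r) = r := by
  simp [lin, coeff_add, coeff_CX, fs3_eq, Finsupp.single_apply]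

lemma pair_indep (u v : Poly F) (d e : Fin 3 →₀ ℕ) (h1 : MvPolynomial.coeff d u = 0)
    (h2 : MvPolynomial.coeff d v ≠ 0) (h3 : MvPolynomial.coeff e u ≠ 0) :
    LinearIndependent F ![u, v] := by
  rw [LinearIndependent.pair_iff]
  intro s t hst
  have hd := congrArg (MvPolynomial.coeff d) hst
  simp only [coeff_add, coeff_smul, coeff_zero, h1, smul_eq_mul, mul_zero, zero_add] at hd
  have ht : t = 0 := by
    rcases mul_eq_zero.mp hd with h | h
    · exact h
    · exact absurd h h2
  subst ht
  refine ⟨?_, rfl⟩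
  have he := congrArg (MvPolynomial.coeff e) hst
  simp only [coeff_add, coeff_smul, coeff_zero, smul_eq_mul, zero_mul, add_zero] at he
  rcases mul_eq_zero.mp he with h | h
  · exact h
  · exact absurd h h3

lemma realpair_contra [Finite F] (W : Submodule F (Poly F))
    (hfr : Module.finrank F ↥W = 2) (h2r : a2r W = 0) (H : Poly F) (hHW : H ∈ W) (hH0 : H ≠ 0)
    (cc : F) (hcc : cc ≠ 0) (f1 f2 : Poly F) (hf1 : f1.IsHomogeneous 1)
    (hf2 : f2.IsHomogeneous 1) (key : C cc * H = f1 * f2) (d e : Fin 3 →₀ ℕ)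
    (hd1 : MvPolynomial.coeff d f1 = 0) (hd2 : MvPolynomial.coeff d f2 ≠ 0)
    (he : MvPolynomial.coeff e f1 ≠ 0) : False := by
  have hmem := isMember_span W H hHW hH0
  have hrp : IsRealPair (Submodule.span F {H}) := by
    intro f hf hf0
    rw [Submodule.mem_span_singleton] at hf
    obtain ⟨μ, rfl⟩ := hf
    have hμ : μ ≠ 0 := by rintro rfl; simp at hf0
    refine ⟨C (μ * cc⁻¹) * f1, f2, hf1.C_mul _, hf2, ?_, ?_⟩
    · apply pair_indep _ _ d e
      · rw [coeff_C_mul, hd1, mul_zero]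
      · exact hd2
      · rw [coeff_C_mul]
        exact mul_ne_zero (mul_ne_zero hμ (inv_ne_zero hcc)) he
    · have h2 : C μ * H = C (μ * cc⁻¹) * (C cc * H) := by
        rw [← mul_assoc, ← C_mul, mul_assoc μ, inv_mul_cancel₀ hcc, mul_one]
      rw [smul_eq_C_mul, h2, key, mul_assoc]
  have hfin : Finite {L : Submodule F (Poly F) // IsMember W L ∧ IsRealPair L} :=
    finite_members W hfr _
  unfold a2r at h2r
  exact Nat.card_ne_zero.mpr ⟨⟨⟨_, hmem, hrp⟩⟩, hfin⟩ h2r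

end Aux
set_option maxHeartbeats 1000000 in
lemma key01 (a00 a11 a22 a01 a02 a12 c0 c1 c2 : F) (htwoP : (2 : Poly F) = 0)
    (hΔC : C a00 * C a12 ^ 2 + C a11 * C a02 ^ 2 + C a22 * C a01 ^ 2
      + C a01 * C a02 * C a12 = (0 : Poly F))
    (hLC : C c0 * C a12 + C c1 * C a02 + C c2 * C a01 = (0 : Poly F)) :
    C a12 * C a12 * (C c1 * C c1 * (C a00 * (X 0 * X 0) + C a11 * (X 1 * X 1) + C a22 * (X 2 * X 2) + C a01 * (X 0 * X 1) + C a02 * (X 0 * X 2) + C a12 * (X 1 * X 2)) + C a11 * (C c0 * X 0 + C c1 * X 1 + C c2 * X 2) ^ 2)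
    = (lin a01 0 a12) * (lin (a12 * (c1 * c1) * a02 + ((c1 * c1) * a22 + a11 * (c2 * c2)) * a01) (a12 * (c1 * c1) * a12) (((c1 * c1) * a22 + a11 * (c2 * c2)) * a12)) := by
  simp only [lin, map_add, map_mul, map_zero, zero_mul]
  linear_combination (C c1 ^ 2 * (X 0 * X 0) : Poly F) * hΔC
    + (C a11 * (C c0 * C a12 - C c1 * C a02 - C c2 * C a01) * (X 0 * X 0) : Poly F) * hLC
    + (((-1):Poly F)*C a01*C a02*C a12*C c1^2*X 0^2 + ((-1):Poly F)*C a22*C a01*C a12*C c1^2*X 0*X 2 + ((-1):Poly F)*C a22*C a01^2*C c1^2*X 0^2 + C a11*C a12^2*C c1*C c2*X 1*X 2 + C a11*C a12^2*C c1^2*X 1^2 + C a11*C a12^2*C c0*C c2*X 0*X 2 + C a11*C a12^2*C c0*C c1*X 0*X 1 + ((-1):Poly F)*C a11*C a01*C a12*C c2^2*X 0*X 2 + C a11*C a01*C a02*C c1*C c2*X 0^2) * htwoP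

set_option maxHeartbeats 1000000 in
lemma key02 (a00 a11 a22 a01 a02 a12 c0 c1 c2 : F) (htwoP : (2 : Poly F) = 0)
    (hΔC : C a00 * C a12 ^ 2 + C a11 * C a02 ^ 2 + C a22 * C a01 ^ 2
      + C a01 * C a02 * C a12 = (0 : Poly F))
    (hLC : C c0 * C a12 + C c1 * C a02 + C c2 * C a01 = (0 : Poly F)) :
    C a12 * C a12 * (C c2 * C c2 * (C a00 * (X 0 * X 0) + C a11 * (X 1 * X 1) + C a22 * (X 2 * X 2) + C a01 * (X 0 * X 1) + C a02 * (X 0 * X 2) + C a12 * (X 1 * X 2)) + C a22 * (C c0 * X 0 + C c1 * X 1 + C c2 * X 2) ^ 2)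
    = (lin a02 a12 0) * (lin (((c2 * c2) * a11 + a22 * (c1 * c1)) * a02 + a12 * (c2 * c2) * a01) (((c2 * c2) * a11 + a22 * (c1 * c1)) * a12) (a12 * (c2 * c2) * a12)) := by
  simp only [lin, map_add, map_mul, map_zero, zero_mul]
  linear_combination (C c2 ^ 2 * (X 0 * X 0) : Poly F) * hΔC
    + (C a22 * (C c0 * C a12 - C c1 * C a02 - C c2 * C a01) * (X 0 * X 0) : Poly F) * hLC
    + (((-1):Poly F)*C a01*C a02*C a12*C c2^2*X 0^2 + C a22*C a12^2*C c2^2*X 2^2 + C a22*C a12^2*C c1*C c2*X 1*X 2 + C a22*C a12^2*C c0*C c2*X 0*X 2 + C a22*C a12^2*C c0*C c1*X 0*X 1 + ((-1):Poly F)*C a22*C a02*C a12*C c1^2*X 0*X 1 + C a22*C a01*C a02*C c1*C c2*X 0^2 + ((-1):Poly F)*C a11*C a02*C a12*C c2^2*X 0*X 1 + ((-1):Poly F)*C a11*C a02^2*C c2^2*X 0^2) * htwoP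

set_option maxHeartbeats 1000000 in
lemma key10 (a00 a11 a22 a01 a02 a12 c0 c1 c2 : F) (htwoP : (2 : Poly F) = 0)
    (hΔC : C a00 * C a12 ^ 2 + C a11 * C a02 ^ 2 + C a22 * C a01 ^ 2
      + C a01 * C a02 * C a12 = (0 : Poly F))
    (hLC : C c0 * C a12 + C c1 * C a02 + C c2 * C a01 = (0 : Poly F)) :
    C a02 * C a02 * (C c0 * C c0 * (C a00 * (X 0 * X 0) + C a11 * (X 1 * X 1) + C a22 * (X 2 * X 2) + C a01 * (X 0 * X 1) + C a02 * (X 0 * X 2) + C a12 * (X 1 * X 2)) + C a00 * (C c0 * X 0 + C c1 * X 1 + C c2 * X 2) ^ 2)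
    = (lin 0 a01 a02) * (lin (a02 * (c0 * c0) * a02) (a02 * (c0 * c0) * a12 + ((c0 * c0) * a22 + a00 * (c2 * c2)) * a01) (((c0 * c0) * a22 + a00 * (c2 * c2)) * a02)) := by
  simp only [lin, map_add, map_mul, map_zero, zero_mul]
  linear_combination (C c0 ^ 2 * (X 1 * X 1) : Poly F) * hΔC
    + (C a00 * (C c1 * C a02 - C c0 * C a12 - C c2 * C a01) * (X 1 * X 1) : Poly F) * hLC
    + (((-1):Poly F)*C a01*C a02*C a12*C c0^2*X 1^2 + ((-1):Poly F)*C a22*C a01*C a02*C c0^2*X 1*X 2 + ((-1):Poly F)*C a22*C a01^2*C c0^2*X 1^2 + C a00*C a02^2*C c1*C c2*X 1*X 2 + C a00*C a02^2*C c0*C c2*X 0*X 2 + C a00*C a02^2*C c0*C c1*X 0*X 1 + C a00*C a02^2*C c0^2*X 0^2 + C a00*C a01*C a12*C c0*C c2*X 1^2 + ((-1):Poly F)*C a00*C a01*C a02*C c2^2*X 1*X 2) * htwoP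

set_option maxHeartbeats 1000000 in
lemma key12 (a00 a11 a22 a01 a02 a12 c0 c1 c2 : F) (htwoP : (2 : Poly F) = 0)
    (hΔC : C a00 * C a12 ^ 2 + C a11 * C a02 ^ 2 + C a22 * C a01 ^ 2
      + C a01 * C a02 * C a12 = (0 : Poly F))
    (hLC : C c0 * C a12 + C c1 * C a02 + C c2 * C a01 = (0 : Poly F)) :
    C a02 * C a02 * (C c2 * C c2 * (C a00 * (X 0 * X 0) + C a11 * (X 1 * X 1) + C a22 * (X 2 * X 2) + C a01 * (X 0 * X 1) + C a02 * (X 0 * X 2) + C a12 * (X 1 * X 2)) + C a22 * (C c0 * X 0 + C c1 * X 1 + C c2 * X 2) ^ 2)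
    = (lin a02 a12 0) * (lin (((c2 * c2) * a00 + a22 * (c0 * c0)) * a02) (((c2 * c2) * a00 + a22 * (c0 * c0)) * a12 + a02 * (c2 * c2) * a01) (a02 * (c2 * c2) * a02)) := by
  simp only [lin, map_add, map_mul, map_zero, zero_mul]
  linear_combination (C c2 ^ 2 * (X 1 * X 1) : Poly F) * hΔC
    + (C a22 * (C c1 * C a02 - C c0 * C a12 - C c2 * C a01) * (X 1 * X 1) : Poly F) * hLC
    + (((-1):Poly F)*C a01*C a02*C a12*C c2^2*X 1^2 + ((-1):Poly F)*C a22*C a02*C a12*C c0^2*X 0*X 1 + C a22*C a02^2*C c2^2*X 2^2 + C a22*C a02^2*C c1*C c2*X 1*X 2 + C a22*C a02^2*C c0*C c2*X 0*X 2 + C a22*C a02^2*C c0*C c1*X 0*X 1 + C a22*C a01*C a12*C c0*C c2*X 1^2 + ((-1):Poly F)*C a00*C a12^2*C c2^2*X 1^2 + ((-1):Poly F)*C a00*C a02*C a12*C c2^2*X 0*X 1) * htwoP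

set_option maxHeartbeats 1000000 in
lemma key20 (a00 a11 a22 a01 a02 a12 c0 c1 c2 : F) (htwoP : (2 : Poly F) = 0)
    (hΔC : C a00 * C a12 ^ 2 + C a11 * C a02 ^ 2 + C a22 * C a01 ^ 2
      + C a01 * C a02 * C a12 = (0 : Poly F))
    (hLC : C c0 * C a12 + C c1 * C a02 + C c2 * C a01 = (0 : Poly F)) :
    C a01 * C a01 * (C c0 * C c0 * (C a00 * (X 0 * X 0) + C a11 * (X 1 * X 1) + C a22 * (X 2 * X 2) + C a01 * (X 0 * X 1) + C a02 * (X 0 * X 2) + C a12 * (X 1 * X 2)) + C a00 * (C c0 * X 0 + C c1 * X 1 + C c2 * X 2) ^ 2)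
    = (lin 0 a01 a02) * (lin (a01 * (c0 * c0) * a01) (((c0 * c0) * a11 + a00 * (c1 * c1)) * a01) (a01 * (c0 * c0) * a12 + ((c0 * c0) * a11 + a00 * (c1 * c1)) * a02)) := by
  simp only [lin, map_add, map_mul, map_zero, zero_mul]
  linear_combination (C c0 ^ 2 * (X 2 * X 2) : Poly F) * hΔC
    + (C a00 * (C c2 * C a01 - C c0 * C a12 - C c1 * C a02) * (X 2 * X 2) : Poly F) * hLC
    + (((-1):Poly F)*C a01*C a02*C a12*C c0^2*X 2^2 + ((-1):Poly F)*C a11*C a02^2*C c0^2*X 2^2 + ((-1):Poly F)*C a11*C a01*C a02*C c0^2*X 1*X 2 + C a00*C a02*C a12*C c0*C c1*X 2^2 + ((-1):Poly F)*C a00*C a01*C a02*C c1^2*X 1*X 2 + C a00*C a01^2*C c1*C c2*X 1*X 2 + C a00*C a01^2*C c0*C c2*X 0*X 2 + C a00*C a01^2*C c0*C c1*X 0*X 1 + C a00*C a01^2*C c0^2*X 0^2) * htwoP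

set_option maxHeartbeats 1000000 in
lemma key21 (a00 a11 a22 a01 a02 a12 c0 c1 c2 : F) (htwoP : (2 : Poly F) = 0)
    (hΔC : C a00 * C a12 ^ 2 + C a11 * C a02 ^ 2 + C a22 * C a01 ^ 2
      + C a01 * C a02 * C a12 = (0 : Poly F))
    (hLC : C c0 * C a12 + C c1 * C a02 + C c2 * C a01 = (0 : Poly F)) :
    C a01 * C a01 * (C c1 * C c1 * (C a00 * (X 0 * X 0) + C a11 * (X 1 * X 1) + C a22 * (X 2 * X 2) + C a01 * (X 0 * X 1) + C a02 * (X 0 * X 2) + C a12 * (X 1 * X 2)) + C a11 * (C c0 * X 0 + C c1 * X 1 + C c2 * X 2) ^ 2)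
    = (lin a01 0 a12) * (lin (((c1 * c1) * a00 + a11 * (c0 * c0)) * a01) (a01 * (c1 * c1) * a01) (((c1 * c1) * a00 + a11 * (c0 * c0)) * a12 + a01 * (c1 * c1) * a02)) := by
  simp only [lin, map_add, map_mul, map_zero, zero_mul]
  linear_combination (C c1 ^ 2 * (X 2 * X 2) : Poly F) * hΔC
    + (C a11 * (C c2 * C a01 - C c0 * C a12 - C c1 * C a02) * (X 2 * X 2) : Poly F) * hLC
    + (((-1):Poly F)*C a01*C a02*C a12*C c1^2*X 2^2 + C a11*C a02*C a12*C c0*C c1*X 2^2 + ((-1):Poly F)*C a11*C a01*C a12*C c0^2*X 0*X 2 + C a11*C a01^2*C c1*C c2*X 1*X 2 + C a11*C a01^2*C c1^2*X 1^2 + C a11*C a01^2*C c0*C c2*X 0*X 2 + C a11*C a01^2*C c0*C c1*X 0*X 1 + ((-1):Poly F)*C a00*C a12^2*C c1^2*X 2^2 + ((-1):Poly F)*C a00*C a01*C a12*C c1^2*X 0*X 2) * htwoP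
set_option maxHeartbeats 1000000 in
/-- a pencil with `a1 = 1`, `a2r = 0` and `a2i > 0` over a finite field of
characteristic 2 with `q > 2` contains a nonsingular conic, i.e. `a3 > 0`. -/
theorem nonsingular_member_exists (F : Type*) [Field F] [Fintype F] [CharP F 2]
    (hq : 2 < Fintype.card F) (W : Submodule F (Poly F)) (hW : IsPencil W)
    (h1 : a1 W = 1) (h2r : a2r W = 0) (h2i : 0 < a2i W) :
    0 < a3 W := by
  classical
  -- characteristic-two facts
  have htwoF : (2 : F) = 0 := by
    simpa using CharP.cast_eq_zero F 2
  have htwoP : (2 : Poly F) = 0 := by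
    rw [← map_ofNat (C : F →+* Poly F) 2, htwoF, map_zero]
  -- extract the double line
  unfold a1 at h1
  obtain ⟨⟨L1, hL1m, hL1d⟩, -⟩ := Nat.card_eq_one_iff_exists.mp h1
  obtain ⟨f1, hf1L, hf10⟩ := exists_ne_zero_of_member W L1 hL1m
  obtain ⟨ℓ, hℓhom, hℓ0, hf1sq⟩ := hL1d f1 hf1L hf10
  -- extract the imaginary pair
  unfold a2i at h2i
  obtain ⟨⟨⟨L2, hL2m, hL2i⟩⟩, -⟩ := Nat.card_pos_iff.mp h2i
  obtain ⟨g, hgL, hg0⟩ := exists_ne_zero_of_member W L2 hL2m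
  obtain ⟨hgsing, hgnofac⟩ := hL2i g hgL hg0
  have hgW : g ∈ W := hL2m.1 hgL
  have hsqW : ℓ ^ 2 ∈ W := by rw [← hf1sq]; exact hL1m.1 hf1L
  have hghom : g.IsHomogeneous 2 := (mem_homogeneousSubmodule _ _).mp (hW.1 hgW)
  have hg := decomp2 g hghom
  have hl := decomp1 ℓ hℓhom
  have hΔ : qc g 0 0 * qc g 1 2 ^ 2 + qc g 1 1 * qc g 0 2 ^ 2 + qc g 2 2 * qc g 0 1 ^ 2 +
      qc g 0 1 * qc g 0 2 * qc g 1 2 = 0 := hgsing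
  set a00 := qc g 0 0 with ha00
  set a11 := qc g 1 1 with ha11
  set a22 := qc g 2 2 with ha22
  set a01 := qc g 0 1 with ha01
  set a02 := qc g 0 2 with ha02
  set a12 := qc g 1 2 with ha12
  set c0 := lc ℓ 0 with hc0
  set c1 := lc ℓ 1 with hc1
  set c2 := lc ℓ 2 with hc2
  -- expansion of ℓ²
  have hsq : ℓ ^ 2 = C (c0 * c0) * (X 0 * X 0) + C (c1 * c1) * (X 1 * X 1)
      + C (c2 * c2) * (X 2 * X 2) := by
    rw [hl]
    simp only [map_mul]
    linear_combination (C c0 * C c1 * (X 0 * X 1) + C c0 * C c2 * (X 0 * X 2)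
      + C c1 * C c2 * (X 1 * X 2) : Poly F) * htwoP
  have hs00 : qc (ℓ ^ 2) 0 0 = c0 * c0 := by
    rw [hsq, qc]; simp [coeff_add, coeff_C_mul, coeff_XX, mul_assoc, fs3_eq, Finsupp.single_apply]
  have hs11 : qc (ℓ ^ 2) 1 1 = c1 * c1 := by
    rw [hsq, qc]; simp [coeff_add, coeff_C_mul, coeff_XX, mul_assoc, fs3_eq, Finsupp.single_apply]
  have hs22 : qc (ℓ ^ 2) 2 2 = c2 * c2 := by
    rw [hsq, qc]; simp [coeff_add, coeff_C_mul, coeff_XX, mul_assoc, fs3_eq, Finsupp.single_apply]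
  have hs01 : qc (ℓ ^ 2) 0 1 = 0 := by
    rw [hsq, qc]; simp [coeff_add, coeff_C_mul, coeff_XX, mul_assoc, fs3_eq, Finsupp.single_apply]
  have hs02 : qc (ℓ ^ 2) 0 2 = 0 := by
    rw [hsq, qc]; simp [coeff_add, coeff_C_mul, coeff_XX, mul_assoc, fs3_eq, Finsupp.single_apply]
  have hs12 : qc (ℓ ^ 2) 1 2 = 0 := by
    rw [hsq, qc]; simp [coeff_add, coeff_C_mul, coeff_XX, mul_assoc, fs3_eq, Finsupp.single_apply]
  -- lifted relations
  have hΔC : C a00 * C a12 ^ 2 + C a11 * C a02 ^ 2 + C a22 * C a01 ^ 2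
      + C a01 * C a02 * C a12 = (0 : Poly F) := by
    have := congrArg (C : F →+* Poly F) hΔ
    simpa [map_add, map_mul, map_pow] using this
  by_cases hv : a01 = 0 ∧ a02 = 0 ∧ a12 = 0
  · -- g is a square of a linear form: contradiction with having no linear factor
    obtain ⟨h01, h02, h12⟩ := hv
    obtain ⟨r0, hr0⟩ := FiniteField.isSquare_of_char_two (by rw [ringChar.eq F 2]) a00
    obtain ⟨r1, hr1⟩ := FiniteField.isSquare_of_char_two (by rw [ringChar.eq F 2]) a11
    obtain ⟨r2, hr2⟩ := FiniteField.isSquare_of_char_two (by rw [ringChar.eq F 2]) a22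
    have hC00 : (C a00 : Poly F) = C r0 * C r0 := by rw [hr0, map_mul]
    have hC11 : (C a11 : Poly F) = C r1 * C r1 := by rw [hr1, map_mul]
    have hC22 : (C a22 : Poly F) = C r2 * C r2 := by rw [hr2, map_mul]
    have hC01 : (C a01 : Poly F) = 0 := by rw [h01, map_zero]
    have hC02 : (C a02 : Poly F) = 0 := by rw [h02, map_zero]
    have hC12 : (C a12 : Poly F) = 0 := by rw [h12, map_zero]
    have hfac : g = lin r0 r1 r2 * lin r0 r1 r2 := by
      rw [hg]
      simp only [lin]
      linear_combination (X 0 * X 0 : Poly F) * hC00 + (X 1 * X 1 : Poly F) * hC11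
        + (X 2 * X 2 : Poly F) * hC22 + (X 0 * X 1 : Poly F) * hC01
        + (X 0 * X 2 : Poly F) * hC02 + (X 1 * X 2 : Poly F) * hC12
        - (C r0 * C r1 * (X 0 * X 1) + C r0 * C r2 * (X 0 * X 2)
          + C r1 * C r2 * (X 1 * X 2) : Poly F) * htwoP
    have hlin0 : lin r0 r1 r2 ≠ 0 := by
      intro h
      apply hg0
      rw [hfac, h, mul_zero]
    exact absurd ⟨lin r0 r1 r2, lin_hom _ _ _, hlin0, ⟨lin r0 r1 r2, hfac⟩⟩ hgnofac
  · by_cases hLv : c0 * a12 + c1 * a02 + c2 * a01 = 0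
    · -- the pencil would contain a real pair: contradiction
      exfalso
      -- lifted relation for L
      have hLC : C c0 * C a12 + C c1 * C a02 + C c2 * C a01 = (0 : Poly F) := by
        have := congrArg (C : F →+* Poly F) hLv
        simpa [map_add, map_mul] using this
      have hlnz : ¬(c0 = 0 ∧ c1 = 0 ∧ c2 = 0) := by
        rintro ⟨h0', h1', h2'⟩
        apply hℓ0
        rw [hl, h0', h1', h2']
        simp
      by_cases h12 : a12 ≠ 0
      · -- case v₀ = a12 ≠ 0
        by_cases hc1' : c1 ≠ 0
        · -- kill the X1² coefficient
          set H := (c1 * c1) • g + a11 • (ℓ ^ 2) with hH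
          have hHW : H ∈ W := Submodule.add_mem _ (Submodule.smul_mem _ _ hgW)
            (Submodule.smul_mem _ _ hsqW)
          have hqH : qc H 1 2 = c1 * c1 * a12 := by
            rw [hH, qc_add, qc_smul, qc_smul, hs12, ← ha12, mul_zero, add_zero]
          have hH0 : H ≠ 0 := by
            intro h
            rw [h, qc_zero] at hqH
            exact h12 (by
              rcases mul_eq_zero.mp hqH.symm with h' | h'
              · exact absurd h' (mul_ne_zero hc1' hc1')
              · exact h')
          have hHC : H = C c1 * C c1 * g + C a11 * ℓ ^ 2 := by
            rw [hH, smul_eq_C_mul, smul_eq_C_mul, map_mul]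
          refine realpair_contra W hW.2 h2r H hHW hH0 (a12 * a12)
            (mul_ne_zero h12 h12)
            (lin a01 0 a12)
            (lin (a12 * (c1 * c1) * a02 + ((c1 * c1) * a22 + a11 * (c2 * c2)) * a01)
                 (a12 * (c1 * c1) * a12)
                 (((c1 * c1) * a22 + a11 * (c2 * c2)) * a12))
            (lin_hom _ _ _) (lin_hom _ _ _) ?_
            (Finsupp.single 1 1) (Finsupp.single 2 1) (by rw [lin_coeff1]) ?_ ?_
          · rw [map_mul, hHC, hg, hl]
            exact key01 a00 a11 a22 a01 a02 a12 c0 c1 c2 htwoP hΔC hLC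
          · rw [lin_coeff1]
            exact mul_ne_zero (mul_ne_zero h12 (mul_ne_zero hc1' hc1')) h12
          · rw [lin_coeff2]
            exact h12
        · push_neg at hc1'
          by_cases hc2' : c2 ≠ 0
          · -- kill the X2² coefficient
            set H := (c2 * c2) • g + a22 • (ℓ ^ 2) with hH
            have hHW : H ∈ W := Submodule.add_mem _ (Submodule.smul_mem _ _ hgW)
              (Submodule.smul_mem _ _ hsqW)
            have hqH : qc H 1 2 = c2 * c2 * a12 := by
              rw [hH, qc_add, qc_smul, qc_smul, hs12, ← ha12, mul_zero, add_zero]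
            have hH0 : H ≠ 0 := by
              intro h
              rw [h, qc_zero] at hqH
              exact h12 (by
                rcases mul_eq_zero.mp hqH.symm with h' | h'
                · exact absurd h' (mul_ne_zero hc2' hc2')
                · exact h')
            have hHC : H = C c2 * C c2 * g + C a22 * ℓ ^ 2 := by
              rw [hH, smul_eq_C_mul, smul_eq_C_mul, map_mul]
            refine realpair_contra W hW.2 h2r H hHW hH0 (a12 * a12)
              (mul_ne_zero h12 h12)
              (lin a02 a12 0)
              (lin (((c2 * c2) * a11 + a22 * (c1 * c1)) * a02 + a12 * (c2 * c2) * a01)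
                   (((c2 * c2) * a11 + a22 * (c1 * c1)) * a12)
                   (a12 * (c2 * c2) * a12))
              (lin_hom _ _ _) (lin_hom _ _ _) ?_
              (Finsupp.single 2 1) (Finsupp.single 1 1) (by rw [lin_coeff2]) ?_ ?_
            · rw [map_mul, hHC, hg, hl]
              exact key02 a00 a11 a22 a01 a02 a12 c0 c1 c2 htwoP hΔC hLC
            · rw [lin_coeff2]
              exact mul_ne_zero (mul_ne_zero h12 (mul_ne_zero hc2' hc2')) h12
            · rw [lin_coeff1]
              exact h12
          · push_neg at hc2'
            have hc0' : c0 = 0 := by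
              have : c0 * a12 = 0 := by
                rw [hc1', hc2'] at hLv
                linear_combination hLv
              rcases mul_eq_zero.mp this with h' | h'
              · exact h'
              · exact absurd h' h12
            exact hlnz ⟨hc0', hc1', hc2'⟩
      · push_neg at h12
        by_cases h02 : a02 ≠ 0
        · -- case v₁ = a02 ≠ 0
          by_cases hc0' : c0 ≠ 0
          · set H := (c0 * c0) • g + a00 • (ℓ ^ 2) with hH
            have hHW : H ∈ W := Submodule.add_mem _ (Submodule.smul_mem _ _ hgW)
              (Submodule.smul_mem _ _ hsqW)
            have hqH : qc H 0 2 = c0 * c0 * a02 := by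
              rw [hH, qc_add, qc_smul, qc_smul, hs02, ← ha02, mul_zero, add_zero]
            have hH0 : H ≠ 0 := by
              intro h
              rw [h, qc_zero] at hqH
              exact h02 (by
                rcases mul_eq_zero.mp hqH.symm with h' | h'
                · exact absurd h' (mul_ne_zero hc0' hc0')
                · exact h')
            have hHC : H = C c0 * C c0 * g + C a00 * ℓ ^ 2 := by
              rw [hH, smul_eq_C_mul, smul_eq_C_mul, map_mul]
            refine realpair_contra W hW.2 h2r H hHW hH0 (a02 * a02)
              (mul_ne_zero h02 h02)
              (lin 0 a01 a02)
              (lin (a02 * (c0 * c0) * a02)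
                   (a02 * (c0 * c0) * a12 + ((c0 * c0) * a22 + a00 * (c2 * c2)) * a01)
                   (((c0 * c0) * a22 + a00 * (c2 * c2)) * a02))
              (lin_hom _ _ _) (lin_hom _ _ _) ?_
              (Finsupp.single 0 1) (Finsupp.single 2 1) (by rw [lin_coeff0]) ?_ ?_
            · rw [map_mul, hHC, hg, hl]
              exact key10 a00 a11 a22 a01 a02 a12 c0 c1 c2 htwoP hΔC hLC
            · rw [lin_coeff0]
              exact mul_ne_zero (mul_ne_zero h02 (mul_ne_zero hc0' hc0')) h02
            · rw [lin_coeff2]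
              exact h02
          · push_neg at hc0'
            by_cases hc2' : c2 ≠ 0
            · set H := (c2 * c2) • g + a22 • (ℓ ^ 2) with hH
              have hHW : H ∈ W := Submodule.add_mem _ (Submodule.smul_mem _ _ hgW)
                (Submodule.smul_mem _ _ hsqW)
              have hqH : qc H 0 2 = c2 * c2 * a02 := by
                rw [hH, qc_add, qc_smul, qc_smul, hs02, ← ha02, mul_zero, add_zero]
              have hH0 : H ≠ 0 := by
                intro h
                rw [h, qc_zero] at hqH
                exact h02 (by
                  rcases mul_eq_zero.mp hqH.symm with h' | h'
                  · exact absurd h' (mul_ne_zero hc2' hc2')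
                  · exact h')
              have hHC : H = C c2 * C c2 * g + C a22 * ℓ ^ 2 := by
                rw [hH, smul_eq_C_mul, smul_eq_C_mul, map_mul]
              refine realpair_contra W hW.2 h2r H hHW hH0 (a02 * a02)
                (mul_ne_zero h02 h02)
                (lin a02 a12 0)
                (lin (((c2 * c2) * a00 + a22 * (c0 * c0)) * a02)
                     (((c2 * c2) * a00 + a22 * (c0 * c0)) * a12 + a02 * (c2 * c2) * a01)
                     (a02 * (c2 * c2) * a02))
                (lin_hom _ _ _) (lin_hom _ _ _) ?_
                (Finsupp.single 2 1) (Finsupp.single 0 1) (by rw [lin_coeff2]) ?_ ?_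
              · rw [map_mul, hHC, hg, hl]
                exact key12 a00 a11 a22 a01 a02 a12 c0 c1 c2 htwoP hΔC hLC
              · rw [lin_coeff2]
                exact mul_ne_zero (mul_ne_zero h02 (mul_ne_zero hc2' hc2')) h02
              · rw [lin_coeff0]
                exact h02
            · push_neg at hc2'
              have hc1'' : c1 = 0 := by
                have : c1 * a02 = 0 := by
                  rw [hc0', hc2'] at hLv
                  linear_combination hLv
                rcases mul_eq_zero.mp this with h' | h'
                · exact h'
                · exact absurd h' h02
              exact hlnz ⟨hc0', hc1'', hc2'⟩
        · push_neg at h02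
          have h01 : a01 ≠ 0 := by
            intro h01
            exact hv ⟨h01, h02, h12⟩
          -- case v₂ = a01 ≠ 0
          by_cases hc0' : c0 ≠ 0
          · set H := (c0 * c0) • g + a00 • (ℓ ^ 2) with hH
            have hHW : H ∈ W := Submodule.add_mem _ (Submodule.smul_mem _ _ hgW)
              (Submodule.smul_mem _ _ hsqW)
            have hqH : qc H 0 1 = c0 * c0 * a01 := by
              rw [hH, qc_add, qc_smul, qc_smul, hs01, ← ha01, mul_zero, add_zero]
            have hH0 : H ≠ 0 := by
              intro h
              rw [h, qc_zero] at hqH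
              exact h01 (by
                rcases mul_eq_zero.mp hqH.symm with h' | h'
                · exact absurd h' (mul_ne_zero hc0' hc0')
                · exact h')
            have hHC : H = C c0 * C c0 * g + C a00 * ℓ ^ 2 := by
              rw [hH, smul_eq_C_mul, smul_eq_C_mul, map_mul]
            refine realpair_contra W hW.2 h2r H hHW hH0 (a01 * a01)
              (mul_ne_zero h01 h01)
              (lin 0 a01 a02)
              (lin (a01 * (c0 * c0) * a01)
                   (((c0 * c0) * a11 + a00 * (c1 * c1)) * a01)
                   (a01 * (c0 * c0) * a12 + ((c0 * c0) * a11 + a00 * (c1 * c1)) * a02))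
              (lin_hom _ _ _) (lin_hom _ _ _) ?_
              (Finsupp.single 0 1) (Finsupp.single 1 1) (by rw [lin_coeff0]) ?_ ?_
            · rw [map_mul, hHC, hg, hl]
              exact key20 a00 a11 a22 a01 a02 a12 c0 c1 c2 htwoP hΔC hLC
            · rw [lin_coeff0]
              exact mul_ne_zero (mul_ne_zero h01 (mul_ne_zero hc0' hc0')) h01
            · rw [lin_coeff1]
              exact h01
          · push_neg at hc0'
            by_cases hc1'' : c1 ≠ 0
            · set H := (c1 * c1) • g + a11 • (ℓ ^ 2) with hH
              have hHW : H ∈ W := Submodule.add_mem _ (Submodule.smul_mem _ _ hgW)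
                (Submodule.smul_mem _ _ hsqW)
              have hqH : qc H 0 1 = c1 * c1 * a01 := by
                rw [hH, qc_add, qc_smul, qc_smul, hs01, ← ha01, mul_zero, add_zero]
              have hH0 : H ≠ 0 := by
                intro h
                rw [h, qc_zero] at hqH
                exact h01 (by
                  rcases mul_eq_zero.mp hqH.symm with h' | h'
                  · exact absurd h' (mul_ne_zero hc1'' hc1'')
                  · exact h')
              have hHC : H = C c1 * C c1 * g + C a11 * ℓ ^ 2 := by
                rw [hH, smul_eq_C_mul, smul_eq_C_mul, map_mul]
              refine realpair_contra W hW.2 h2r H hHW hH0 (a01 * a01)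
                (mul_ne_zero h01 h01)
                (lin a01 0 a12)
                (lin (((c1 * c1) * a00 + a11 * (c0 * c0)) * a01)
                     (a01 * (c1 * c1) * a01)
                     (((c1 * c1) * a00 + a11 * (c0 * c0)) * a12 + a01 * (c1 * c1) * a02))
                (lin_hom _ _ _) (lin_hom _ _ _) ?_
                (Finsupp.single 1 1) (Finsupp.single 0 1) (by rw [lin_coeff1]) ?_ ?_
              · rw [map_mul, hHC, hg, hl]
                exact key21 a00 a11 a22 a01 a02 a12 c0 c1 c2 htwoP hΔC hLC
              · rw [lin_coeff1]
                exact mul_ne_zero (mul_ne_zero h01 (mul_ne_zero hc1'' hc1'')) h01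
              · rw [lin_coeff0]
                exact h01
            · push_neg at hc1''
              have hc2'' : c2 = 0 := by
                have : c2 * a01 = 0 := by
                  rw [hc0', hc1''] at hLv
                  linear_combination hLv
                rcases mul_eq_zero.mp this with h' | h'
                · exact h'
                · exact absurd h' h01
              exact hlnz ⟨hc0', hc1'', hc2''⟩
    · -- main case: g + ℓ² generates a nonsingular member
      set h' := g + ℓ ^ 2 with hh'
      have hh'W : h' ∈ W := Submodule.add_mem _ hgW hsqW
      have hq00 : qc h' 0 0 = a00 + c0 * c0 := by rw [hh', qc_add, hs00, ha00]
      have hq11 : qc h' 1 1 = a11 + c1 * c1 := by rw [hh', qc_add, hs11, ha11]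
      have hq22 : qc h' 2 2 = a22 + c2 * c2 := by rw [hh', qc_add, hs22, ha22]
      have hq01 : qc h' 0 1 = a01 := by rw [hh', qc_add, hs01, ha01, add_zero]
      have hq02 : qc h' 0 2 = a02 := by rw [hh', qc_add, hs02, ha02, add_zero]
      have hq12 : qc h' 1 2 = a12 := by rw [hh', qc_add, hs12, ha12, add_zero]
      have hΔh : qc h' 0 0 * qc h' 1 2 ^ 2 + qc h' 1 1 * qc h' 0 2 ^ 2
          + qc h' 2 2 * qc h' 0 1 ^ 2 + qc h' 0 1 * qc h' 0 2 * qc h' 1 2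
          = (c0 * a12 + c1 * a02 + c2 * a01) ^ 2 := by
        rw [hq00, hq11, hq22, hq01, hq02, hq12]
        linear_combination hΔ - (a02 * a12 * c0 * c1 + a01 * a12 * c0 * c2
          + a01 * a02 * c1 * c2) * htwoF
      have hLsq : (c0 * a12 + c1 * a02 + c2 * a01) ^ 2 ≠ 0 := pow_ne_zero _ hLv
      have hh'0 : h' ≠ 0 := by
        intro h
        apply hLsq
        rw [← hΔh, h]
        simp [qc_zero]
      have hmem := isMember_span W h' hh'W hh'0
      have hns : IsNonsingularConic (Submodule.span F {h'}) := by
        intro f hf hf0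
        rw [Submodule.mem_span_singleton] at hf
        obtain ⟨μ, rfl⟩ := hf
        have hμ : μ ≠ 0 := by rintro rfl; simp at hf0
        intro hfs
        have hfs' : qc (μ • h') 0 0 * qc (μ • h') 1 2 ^ 2 + qc (μ • h') 1 1 * qc (μ • h') 0 2 ^ 2
            + qc (μ • h') 2 2 * qc (μ • h') 0 1 ^ 2
            + qc (μ • h') 0 1 * qc (μ • h') 0 2 * qc (μ • h') 1 2 = 0 := hfs
        rw [qc_smul, qc_smul, qc_smul, qc_smul, qc_smul, qc_smul] at hfs'
        have hμ3 : μ ^ 3 * (qc h' 0 0 * qc h' 1 2 ^ 2 + qc h' 1 1 * qc h' 0 2 ^ 2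
            + qc h' 2 2 * qc h' 0 1 ^ 2 + qc h' 0 1 * qc h' 0 2 * qc h' 1 2) = 0 := by
          linear_combination hfs'
        rw [hΔh] at hμ3
        exact mul_ne_zero (pow_ne_zero _ hμ) hLsq hμ3
      have hfin : Finite {L : Submodule F (Poly F) // IsMember W L ∧ IsNonsingularConic L} :=
        finite_members W hW.2 _
      unfold a3
      exact Nat.card_pos_iff.mpr ⟨⟨⟨_, hmem, hns⟩⟩, hfin⟩

end Pencils
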